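/- In the MISER code with n = 2k, d = n-1, α = k over F_q (Ψ an α×α matrix with all submatrices full rank, ε ≠ 0, ε² ≠ 1): for any k-subset of nodes, the B×B matrix formed by concatenating their generator matrices is invertible (the code is MDS). -/
import Mathlib


/-- The nodal generator matrices of the MISER code for `n = 2k`, `d = n - 1`, `α = k`:
nodes `m < k` are systematic, nodes `k ≤ m < 2k` are parity nodes built from the
columns of `Ψ` and the scalar `ε`. -/
def miserGen {F : Type*} [Field F] (k : ℕ) (Ψ : Matrix (Fin k) (Fin k) F) (ε : F) :
    Fin (2 * k) → Matrix (Fin k × Fin k) (Fin k) F :=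
  fun m => Matrix.of fun r j =>
    if (m : ℕ) < k then (if (r.1 : ℕ) = (m : ℕ) ∧ r.2 = j then 1 else 0)
    else if r.1 = j then ε * Ψ r.2 ⟨(m : ℕ) - k, by have := m.isLt; omega⟩
    else if r.2 = j then Ψ r.1 ⟨(m : ℕ) - k, by have := m.isLt; omega⟩ else 0

lemma miser_key {F : Type*} [Field F] {k : ℕ} (Ψ : Matrix (Fin k) (Fin k) F)
    (hΨ : ∀ (r : ℕ) (rows cols : Fin r → Fin k), Function.Injective rows →
      Function.Injective cols → IsUnit (Ψ.submatrix rows cols))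
    (T B : Finset (Fin k)) (hcard : B.card = T.card)
    (c : Fin k → Fin k) (hc : Set.InjOn c ↑T)
    (w : Fin k → F)
    (hw : ∀ r ∈ B, (∑ j1 ∈ T, w j1 * Ψ r (c j1)) = 0) :
    ∀ j1 ∈ T, w j1 = 0 := by
  set q := T.card with hq
  let eP : Fin q ≃o {x // x ∈ T} := T.orderIsoOfFin rfl
  let eA : Fin q ≃o {x // x ∈ B} := B.orderIsoOfFin hcard
  have hrows_inj : Function.Injective (fun i : Fin q => (eA i : Fin k)) :=
    fun a b hab => eA.injective (Subtype.ext hab)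
  have hcols_inj : Function.Injective (fun i : Fin q => c (eP i : Fin k)) := by
    intro a b hab
    exact eP.injective (Subtype.ext (hc (eP a).2 (eP b).2 hab))
  have hN := hΨ q _ _ hrows_inj hcols_inj
  have hmv : (Ψ.submatrix (fun i : Fin q => (eA i : Fin k))
      (fun i : Fin q => c (eP i : Fin k))).mulVec (fun i => w ((eP i : Fin k))) = 0 := by
    funext i
    have hsum : (∑ j : Fin q, Ψ (eA i : Fin k) (c (eP j : Fin k)) * w ((eP j : Fin k)))
        = ∑ j1 ∈ T, w j1 * Ψ (eA i : Fin k) (c j1) := by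
      rw [← Finset.sum_attach T (fun j1 => w j1 * Ψ (eA i : Fin k) (c j1))]
      refine Fintype.sum_equiv eP.toEquiv _ _ (fun j => ?_)
      exact mul_comm _ _
    simp only [Matrix.mulVec, dotProduct, Matrix.submatrix_apply, Pi.zero_apply]
    rw [hsum, hw _ (eA i).2]
  have hw0 : (fun i => w ((eP i : Fin k))) = 0 := by
    have hdN := (Matrix.isUnit_iff_isUnit_det _).mp hN
    have h2 := congrArg (fun x => (Ψ.submatrix (fun i : Fin q => (eA i : Fin k))
      (fun i : Fin q => c (eP i : Fin k)))⁻¹.mulVec x) hmv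
    simpa [Matrix.mulVec_mulVec, Matrix.nonsing_inv_mul _ hdN] using h2
  intro j1 hj1
  have h3 : w ((eP (eP.symm ⟨j1, hj1⟩) : Fin k)) = 0 := congrFun hw0 _
  simpa using h3

/-- The MISER code is MDS: any `k` of the `2k` nodal generator matrices concatenate
to an invertible `B × B` matrix. -/
theorem miser_mds
    {F : Type*} [Field F] [Fintype F] {k : ℕ}
    (Ψ : Matrix (Fin k) (Fin k) F)
    (hΨ : ∀ (r : ℕ) (rows cols : Fin r → Fin k), Function.Injective rows →
      Function.Injective cols → IsUnit (Ψ.submatrix rows cols))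
    (ε : F) (hε : ε ≠ 0) (hε2 : ε ^ 2 ≠ 1) :
    ∀ s : Fin k → Fin (2 * k), Function.Injective s →
      IsUnit (Matrix.of (fun r (j : Fin k × Fin k) => miserGen k Ψ ε (s j.1) r j.2) :
        Matrix (Fin k × Fin k) (Fin k × Fin k) F) := by
  intro s hs
  rcases Nat.eq_zero_or_pos k with hk | hk
  · subst hk
    rw [Matrix.isUnit_iff_isUnit_det, Matrix.det_isEmpty]
    exact isUnit_one
  rw [Matrix.isUnit_iff_isUnit_det, isUnit_iff_ne_zero]
  intro hdet
  obtain ⟨v, hv0, hv⟩ := Matrix.exists_mulVec_eq_zero_iff.mpr hdet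
  -- injectivity of `s` on values
  have hsv : ∀ a b : Fin k, (s a : ℕ) = (s b : ℕ) → a = b := fun a b h => hs (Fin.ext h)
  -- the parity index map
  set t : Fin k → Fin k := fun j1 => ⟨(s j1 : ℕ) - k, by have := (s j1).isLt; omega⟩ with htdef
  -- systematic and parity slots
  set Sfin : Finset (Fin k) := Finset.univ.filter (fun j1 => (s j1 : ℕ) < k) with hSdef
  set Pfin : Finset (Fin k) := Finset.univ.filter (fun j1 => ¬ (s j1 : ℕ) < k) with hPdef
  -- image of systematic values
  set g : Fin k → Fin k := fun j1 => ⟨(s j1 : ℕ) % k, Nat.mod_lt _ hk⟩ with hgdef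
  set A : Finset (Fin k) := Sfin.image g with hAdef
  have hmemA : ∀ r : Fin k, r ∈ A ↔ ∃ j1, (s j1 : ℕ) < k ∧ (s j1 : ℕ) = (r : ℕ) := by
    intro r
    constructor
    · rintro hr
      obtain ⟨j1, hj1, hgj⟩ := Finset.mem_image.mp hr
      have hlt : (s j1 : ℕ) < k := (Finset.mem_filter.mp hj1).2
      refine ⟨j1, hlt, ?_⟩
      have : ((g j1 : Fin k) : ℕ) = (r : ℕ) := by rw [hgj]
      simpa [hgdef, Nat.mod_eq_of_lt hlt] using this
    · rintro ⟨j1, hlt, heq⟩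
      refine Finset.mem_image.mpr ⟨j1, Finset.mem_filter.mpr ⟨Finset.mem_univ _, hlt⟩, ?_⟩
      apply Fin.ext
      simpa [hgdef, Nat.mod_eq_of_lt hlt] using heq
  have hcardA : A.card = Sfin.card := by
    apply Finset.card_image_of_injOn
    intro a ha b hb hab
    have ha' : (s a : ℕ) < k := (Finset.mem_filter.mp ha).2
    have hb' : (s b : ℕ) < k := (Finset.mem_filter.mp hb).2
    apply hsv
    have : ((g a : Fin k) : ℕ) = ((g b : Fin k) : ℕ) := by rw [hab]
    simpa [hgdef, Nat.mod_eq_of_lt ha', Nat.mod_eq_of_lt hb'] using this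
  have hcardSP : Sfin.card + Pfin.card = k := by
    have := Finset.card_filter_add_card_filter_not
      (s := (Finset.univ : Finset (Fin k))) (p := fun j1 => (s j1 : ℕ) < k)
    simpa [hSdef, hPdef] using this
  have hAcard_le : A.card ≤ k := by
    have := Finset.card_le_univ A
    simpa using this
  have hAc : Aᶜ.card = Pfin.card := by
    rw [Finset.card_compl]
    simp only [Fintype.card_fin]
    omega
  have hinjt : Set.InjOn t ↑Pfin := by
    intro a ha b hb hab
    have ha' : ¬ ((s a : ℕ) < k) := (Finset.mem_filter.mp (Finset.mem_coe.mp ha)).2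
    have hb' : ¬ ((s b : ℕ) < k) := (Finset.mem_filter.mp (Finset.mem_coe.mp hb)).2
    apply hsv
    have hval : ((t a : Fin k) : ℕ) = ((t b : Fin k) : ℕ) := congrArg Fin.val hab
    simp only [htdef] at hval
    omega
  have key : ∀ w : Fin k → F,
      (∀ r : Fin k, r ∉ A → (∑ j1 ∈ Pfin, w j1 * Ψ r (t j1)) = 0) →
      ∀ j1 ∈ Pfin, w j1 = 0 :=
    fun w hw => miser_key Ψ hΨ Pfin Aᶜ hAc t hinjt w
      (fun r hr => hw r (Finset.mem_compl.mp hr))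
  -- the linear relations coming from the kernel vector
  have hEq : ∀ r1 r2 : Fin k,
      (∑ j1 ∈ Sfin, (if (r1 : ℕ) = (s j1 : ℕ) then v (j1, r2) else 0))
      + (∑ j1 ∈ Pfin, (ε * Ψ r2 (t j1) * v (j1, r1)
          + (if r2 = r1 then 0 else Ψ r1 (t j1) * v (j1, r2)))) = 0 := by
    intro r1 r2
    have h0 := congrFun hv (r1, r2)
    simp only [Matrix.mulVec, dotProduct, Pi.zero_apply] at h0
    rw [Fintype.sum_prod_type] at h0
    have inner : ∀ j1 : Fin k,
        (∑ j2 : Fin k, (Matrix.of (fun r (j : Fin k × Fin k) =>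
            miserGen k Ψ ε (s j.1) r j.2) : Matrix (Fin k × Fin k) (Fin k × Fin k) F)
            (r1, r2) (j1, j2) * v (j1, j2))
        = if (s j1 : ℕ) < k then (if (r1 : ℕ) = (s j1 : ℕ) then v (j1, r2) else 0)
          else ε * Ψ r2 (t j1) * v (j1, r1)
            + (if r2 = r1 then 0 else Ψ r1 (t j1) * v (j1, r2)) := by
      intro j1
      by_cases hj : (s j1 : ℕ) < k
      · simp only [Matrix.of_apply, miserGen, hj, if_true]
        by_cases hr : (r1 : ℕ) = (s j1 : ℕ)
        · simp [hr, Finset.sum_ite_eq]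
        · simp [hr]
      · simp only [Matrix.of_apply, miserGen, hj, if_false]
        have hterm : ∀ j2 : Fin k,
            (if r1 = j2 then ε * Ψ r2 (t j1)
              else if r2 = j2 then Ψ r1 (t j1) else 0) * v (j1, j2)
            = (if j2 = r1 then ε * Ψ r2 (t j1) * v (j1, r1) else 0)
              + (if j2 = r2 ∧ r2 ≠ r1 then Ψ r1 (t j1) * v (j1, r2) else 0) := by
          intro j2
          by_cases h1 : r1 = j2
          · subst h1
            have h3 : ¬ (r1 = r2 ∧ ¬ r2 = r1) := fun h => h.2 h.1.symm
            rw [if_pos rfl, if_pos rfl, if_neg h3, add_zero, mul_assoc]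
          · by_cases h2 : r2 = j2
            · subst h2
              rw [if_neg h1, if_pos rfl, if_neg (fun h => h1 h.symm), zero_add,
                if_pos ⟨rfl, fun h => h1 h.symm⟩]
            · rw [if_neg h1, if_neg h2, zero_mul, if_neg (fun h => h1 h.symm),
                if_neg (fun h => h2 h.1.symm), add_zero]
        calc (∑ j2 : Fin k, (if r1 = j2 then ε * Ψ r2 (t j1)
                else if r2 = j2 then Ψ r1 (t j1) else 0) * v (j1, j2))
            = ∑ j2 : Fin k, ((if j2 = r1 then ε * Ψ r2 (t j1) * v (j1, r1) else 0)
              + (if j2 = r2 ∧ r2 ≠ r1 then Ψ r1 (t j1) * v (j1, r2) else 0)) := by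
              exact Finset.sum_congr rfl (fun j2 _ => hterm j2)
          _ = ε * Ψ r2 (t j1) * v (j1, r1)
              + (if r2 = r1 then 0 else Ψ r1 (t j1) * v (j1, r2)) := by
              rw [Finset.sum_add_distrib]
              congr 1
              · simp [Finset.sum_ite_eq']
              · by_cases h2 : r2 = r1 <;> simp [h2, Finset.sum_ite_eq']
    calc (∑ j1 ∈ Sfin, (if (r1 : ℕ) = (s j1 : ℕ) then v (j1, r2) else 0))
        + (∑ j1 ∈ Pfin, (ε * Ψ r2 (t j1) * v (j1, r1)
            + (if r2 = r1 then 0 else Ψ r1 (t j1) * v (j1, r2))))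
        = ∑ j1 : Fin k, (if (s j1 : ℕ) < k
            then (if (r1 : ℕ) = (s j1 : ℕ) then v (j1, r2) else 0)
            else ε * Ψ r2 (t j1) * v (j1, r1)
              + (if r2 = r1 then 0 else Ψ r1 (t j1) * v (j1, r2))) := by
          rw [← Finset.sum_filter_add_sum_filter_not Finset.univ (fun j1 => (s j1 : ℕ) < k)]
          congr 1
          · exact Finset.sum_congr rfl (fun j1 hj1 => by
              simp [(Finset.mem_filter.mp hj1).2])
          · exact Finset.sum_congr rfl (fun j1 hj1 => by
              simp [(Finset.mem_filter.mp hj1).2])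
      _ = ∑ j1 : Fin k, ∑ j2 : Fin k, _ := (Finset.sum_congr rfl (fun j1 _ => (inner j1).symm))
      _ = 0 := h0
  -- the auxiliary vectors u
  set u : Fin k → Fin k → F := fun j2 r => ∑ j1 ∈ Pfin, v (j1, j2) * Ψ r (t j1) with hudef
  have hEq' : ∀ r1 r2 : Fin k, r1 ∉ A →
      ε * u r1 r2 + (if r2 = r1 then 0 else u r2 r1) = 0 := by
    intro r1 r2 h1
    have h := hEq r1 r2
    have hsys : (∑ j1 ∈ Sfin, (if (r1 : ℕ) = (s j1 : ℕ) then v (j1, r2) else 0)) = 0 := by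
      refine Finset.sum_eq_zero (fun j1 hj1 => ?_)
      have hlt : (s j1 : ℕ) < k := (Finset.mem_filter.mp hj1).2
      have : (r1 : ℕ) ≠ (s j1 : ℕ) := by
        intro hcon
        exact h1 ((hmemA r1).mpr ⟨j1, hlt, hcon.symm⟩)
      simp [this]
    rw [hsys, zero_add, Finset.sum_add_distrib] at h
    have e1 : (∑ j1 ∈ Pfin, ε * Ψ r2 (t j1) * v (j1, r1)) = ε * u r1 r2 := by
      rw [hudef, Finset.mul_sum]
      exact Finset.sum_congr rfl (fun j1 _ => by ring)
    have e2 : (∑ j1 ∈ Pfin, (if r2 = r1 then 0 else Ψ r1 (t j1) * v (j1, r2)))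
        = (if r2 = r1 then 0 else u r2 r1) := by
      by_cases h2 : r2 = r1
      · simp [h2]
      · simp only [h2, if_false, hudef]
        exact Finset.sum_congr rfl (fun j1 _ => by ring)
    rw [e1, e2] at h
    exact h
  have hdiag : ∀ r : Fin k, r ∉ A → u r r = 0 := by
    intro r hr
    have h := hEq' r r hr
    rw [if_pos rfl, add_zero] at h
    exact (mul_eq_zero.mp h).resolve_left hε
  have hoff : ∀ r1 : Fin k, r1 ∉ A → ∀ r2 : Fin k, r2 ∉ A → u r1 r2 = 0 := by
    intro r1 h1 r2 h2
    by_cases hne : r2 = r1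
    · subst hne; exact hdiag r2 h2
    have e1 := hEq' r1 r2 h1
    have e2 := hEq' r2 r1 h2
    rw [if_neg hne] at e1
    rw [if_neg (Ne.symm hne)] at e2
    have hmain : (ε ^ 2 - 1) * u r1 r2 = 0 := by ring_nf; linear_combination ε * e1 - e2
    have hne2 : ε ^ 2 - 1 ≠ 0 := sub_ne_zero.mpr hε2
    exact (mul_eq_zero.mp hmain).resolve_left hne2
  have hvP1 : ∀ j2 : Fin k, j2 ∉ A → ∀ j1 ∈ Pfin, v (j1, j2) = 0 := by
    intro j2 hj2
    exact key (fun j1 => v (j1, j2)) (fun r hr => hoff j2 hj2 r hr)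
  have hu0 : ∀ j2 : Fin k, j2 ∉ A → ∀ r : Fin k, u j2 r = 0 := by
    intro j2 hj2 r
    exact Finset.sum_eq_zero (fun j1 hj1 => by rw [hvP1 j2 hj2 j1 hj1, zero_mul])
  have hvP : ∀ j2 : Fin k, ∀ j1 ∈ Pfin, v (j1, j2) = 0 := by
    intro j2
    by_cases hj2 : j2 ∈ A
    · refine key (fun j1 => v (j1, j2)) (fun r hr => ?_)
      have hne : j2 ≠ r := fun h => hr (h ▸ hj2)
      have h := hEq' r j2 hr
      rw [if_neg hne, hu0 r hr j2, mul_zero, zero_add] at h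
      exact h
    · exact hvP1 j2 hj2
  have hvS : ∀ j1 ∈ Sfin, ∀ j2 : Fin k, v (j1, j2) = 0 := by
    intro j1 hj1 j2
    have hlt : (s j1 : ℕ) < k := (Finset.mem_filter.mp hj1).2
    set r1 : Fin k := ⟨(s j1 : ℕ), hlt⟩ with hr1
    have h := hEq r1 j2
    have hpar : (∑ j1' ∈ Pfin, (ε * Ψ j2 (t j1') * v (j1', r1)
        + (if j2 = r1 then 0 else Ψ r1 (t j1') * v (j1', j2)))) = 0 := by
      refine Finset.sum_eq_zero (fun j1' hj1' => ?_)
      rw [hvP r1 j1' hj1', hvP j2 j1' hj1']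
      simp
    rw [hpar, add_zero] at h
    rw [Finset.sum_eq_single_of_mem j1 hj1] at h
    · simpa [hr1] using h
    · intro b hb hbne
      have hltb : (s b : ℕ) < k := (Finset.mem_filter.mp hb).2
      have : (r1 : ℕ) ≠ (s b : ℕ) := by
        intro hcon
        exact hbne (hsv b j1 (by simpa [hr1] using hcon.symm))
      simp [this]
  apply hv0
  funext c
  obtain ⟨j1, j2⟩ := c
  by_cases hj : (s j1 : ℕ) < k
  · exact hvS j1 (Finset.mem_filter.mpr ⟨Finset.mem_univ _, hj⟩) j2
  · exact hvP j2 j1 (Finset.mem_filter.mpr ⟨Finset.mem_univ _, hj⟩)
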